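/- The set of equilibrium states of the type-4 fractional Stokes system, i.e. the set of (u¹, u², u³) ∈ ℝ³ satisfying (l₂−l₃)u²u³ + b₂u³ − b₃u² = 0, (l₃−l₁)u³u¹ + b₃u¹ − b₁u³ = 0 and (l₁−l₂)u¹u² + b₁u² − b₂u¹ = 0, is exactly {(b₁m/(b₃ + (l₃−l₁)m), b₂m/(b₃ + (l₃−l₂)m), m) : m ∈ ℝ, b₃ + (l₃−l₁)m ≠ 0 and b₃ + (l₃−l₂)m ≠ 0}. -/

import Mathlib

/-- Equilibrium states of the type-4 fractional Stokes system. -/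
theorem stmt_5 (l₁ l₂ l₃ b₁ b₂ b₃ : ℝ) (h₁₂ : l₁ ≠ l₂) (h₂₃ : l₂ ≠ l₃) (h₃₁ : l₃ ≠ l₁)
    (hb₁ : b₁ ≠ 0) (hb₂ : b₂ ≠ 0) (hb₃ : b₃ ≠ 0) :
    {u : ℝ × ℝ × ℝ |
        (l₂ - l₃) * u.2.1 * u.2.2 + b₂ * u.2.2 - b₃ * u.2.1 = 0 ∧
        (l₃ - l₁) * u.2.2 * u.1 + b₃ * u.1 - b₁ * u.2.2 = 0 ∧
        (l₁ - l₂) * u.1 * u.2.1 + b₁ * u.2.1 - b₂ * u.1 = 0} =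
    {u : ℝ × ℝ × ℝ | ∃ m : ℝ, (b₃ + (l₃ - l₁) * m ≠ 0 ∧ b₃ + (l₃ - l₂) * m ≠ 0) ∧
        u = (b₁ * m / (b₃ + (l₃ - l₁) * m), b₂ * m / (b₃ + (l₃ - l₂) * m), m)} := by
  ext ⟨x, y, z⟩
  simp only [Set.mem_setOf_eq, Prod.mk.injEq]
  constructor
  · rintro ⟨e1, e2, e3⟩
    have hA : b₃ + (l₃ - l₁) * z ≠ 0 := by
      intro h
      have hx : b₁ * z = 0 := by linear_combination x * h - e2
      rcases mul_eq_zero.mp hx with h' | h'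
      · exact hb₁ h'
      · apply hb₃; linear_combination h - (l₃ - l₁) * h'
    have hB : b₃ + (l₃ - l₂) * z ≠ 0 := by
      intro h
      have hy : b₂ * z = 0 := by linear_combination y * h + e1
      rcases mul_eq_zero.mp hy with h' | h'
      · exact hb₂ h'
      · apply hb₃; linear_combination h - (l₃ - l₂) * h'
    refine ⟨z, ⟨hA, hB⟩, ?_, ?_, rfl⟩
    · rw [eq_div_iff hA]; linear_combination e2
    · rw [eq_div_iff hB]; linear_combination -e1
  · rintro ⟨m, ⟨hA, hB⟩, hx, hy, hz⟩
    subst hx hy hz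
    refine ⟨?_, ?_, ?_⟩
    · linear_combination (-b₂ * z) * mul_inv_cancel₀ hB
    · field_simp; ring
    · linear_combination b₁ * b₂ * z * (b₃ + (l₃ - l₁) * z)⁻¹ * mul_inv_cancel₀ hB - b₁ * b₂ * z * (b₃ + (l₃ - l₂) * z)⁻¹ * mul_inv_cancel₀ hA
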